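/- For a symmetric trade-off function f with f(0) = 1, writing D_f(x) := -f'(1-x) (defined almost everywhere since f is convex), the functional identity ∫₀¹ D_f(x) log D_f(x) dx = -∫₀¹ log D_f(x) dx holds; i.e., ν̃₁(f) = ν₁(f). -/
import Mathlib


open MeasureTheory ProbabilityTheory Set Filter Topology

noncomputable def tradeoff {Ω : Type*} [MeasurableSpace Ω] (P Q : Measure Ω) (α : ℝ) : ℝ :=
  sInf { β | ∃ φ : Ω → ℝ, Measurable φ ∧ (∀ x, φ x ∈ Icc (0:ℝ) 1) ∧
    (∫ x, φ x ∂P) ≤ α ∧ β = 1 - ∫ x, φ x ∂Q }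

def IsTradeoffFn (f : ℝ → ℝ) : Prop :=
  ConvexOn ℝ (Icc 0 1) f ∧ ContinuousOn f (Icc 0 1) ∧ AntitoneOn f (Icc 0 1) ∧
    ∀ α ∈ Icc (0:ℝ) 1, f α ∈ Icc (0:ℝ) 1 ∧ f α ≤ 1 - α

noncomputable def tfInv (f : ℝ → ℝ) (β : ℝ) : ℝ := sInf {α | α ∈ Icc (0:ℝ) 1 ∧ f α ≤ β}

noncomputable def stdNormCDF (x : ℝ) : ℝ := (gaussianReal 0 1 (Iic x)).toReal
noncomputable def stdNormCDFInv (p : ℝ) : ℝ := sInf {x : ℝ | p ≤ stdNormCDF x}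
noncomputable def Gmu (μ α : ℝ) : ℝ := stdNormCDF (stdNormCDFInv (1 - α) - μ)

noncomputable def nu1 (f : ℝ → ℝ) : ℝ := -∫ x in (0:ℝ)..1, Real.log |deriv f x|
noncomputable def nu2 (f : ℝ → ℝ) : ℝ := ∫ x in (0:ℝ)..1, ((Real.log |deriv f x|) ^ 2)
noncomputable def nu3 (f : ℝ → ℝ) : ℝ := ∫ x in (0:ℝ)..1, ((abs (Real.log |deriv f x|)) ^ 3)
noncomputable def nubar3 (f : ℝ → ℝ) : ℝ := ∫ x in (0:ℝ)..1, ((abs (Real.log |deriv f x| + nu1 f)) ^ 3)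

/-- `f 1 = 0` for a trade-off function. -/
lemma tf_one_aux {f : ℝ → ℝ} (hf : IsTradeoffFn f) : f 1 = 0 := by
  have h := hf.2.2.2 1 (by norm_num)
  have h1 := h.1.1
  have h2 := h.2
  linarith

/-- Symmetry gives that `f` is an involution on `[0,1]`. -/
lemma tf_invol_aux {f : ℝ → ℝ} (hf : IsTradeoffFn f)
    (hsym : ∀ β ∈ Icc (0:ℝ) 1, tfInv f β = f β) (h0 : f 0 = 1) :
    ∀ β ∈ Icc (0:ℝ) 1, f (f β) = β := by
  obtain ⟨hcvx, hcont, hanti, hmaps⟩ := hf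
  have h1 : f 1 = 0 := tf_one_aux ⟨hcvx, hcont, hanti, hmaps⟩
  intro β hβ
  set S := {α | α ∈ Icc (0:ℝ) 1 ∧ f α ≤ β} with hS
  have h1S : (1:ℝ) ∈ S := ⟨right_mem_Icc.2 zero_le_one, by rw [h1]; exact hβ.1⟩
  have hbdd : BddBelow S := ⟨0, fun a ha => ha.1.1⟩
  have hclosed : IsClosed S := by
    have hSeq : S = Icc 0 1 ∩ f ⁻¹' (Iic β) := by
      ext a; simp [hS]
    rw [hSeq]
    exact hcont.preimage_isClosed_of_isClosed isClosed_Icc isClosed_Iic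
  have hmem : sInf S ∈ S := hclosed.csInf_mem ⟨1, h1S⟩ hbdd
  have hsInf : sInf S = f β := hsym β hβ
  rw [hsInf] at hmem
  refine le_antisymm hmem.2 ?_
  by_contra hlt
  push_neg at hlt
  have hfβ : f β ∈ Icc (0:ℝ) 1 := hmem.1
  rcases eq_or_lt_of_le hfβ.1 with h0' | h0'
  · have : f (f β) = 1 := by rw [← h0']; exact h0
    rw [this] at hlt
    exact absurd hβ.2 (not_le.2 hlt)
  · have hc : ContinuousWithinAt f (Icc 0 1) (f β) := hcont _ hfβ
    have hev : ∀ᶠ α in 𝓝[Icc (0:ℝ) 1] (f β), f α < β := hc (Iio_mem_nhds hlt)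
    have hle : 𝓝[Ico (0:ℝ) (f β)] (f β) ≤ 𝓝[Icc (0:ℝ) 1] (f β) :=
      nhdsWithin_mono _ (fun a ha => ⟨ha.1, ha.2.le.trans hfβ.2⟩)
    have hne : (𝓝[Ico (0:ℝ) (f β)] (f β)).NeBot := by
      rw [← mem_closure_iff_nhdsWithin_neBot, closure_Ico h0'.ne]
      exact right_mem_Icc.2 h0'.le
    have hev2 : ∀ᶠ α in 𝓝[Ico (0:ℝ) (f β)] (f β), f α < β := hle hev
    obtain ⟨α, hα1, hα2⟩ := (hev2.and self_mem_nhdsWithin).exists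
    have hαS : α ∈ S := ⟨⟨hα2.1, hα2.2.le.trans hfβ.2⟩, hα1.le⟩
    have : sInf S ≤ α := csInf_le hbdd hαS
    rw [hsInf] at this
    exact absurd hα2.2 (not_lt.2 this)

/-- for a symmetric trade-off function `f` with `f 0 = 1`,
`∫₀¹ D_f(x) log D_f(x) dx = -∫₀¹ log|f'(x)| dx`, i.e. `ν̃₁(f) = ν₁(f)`. -/
theorem nu1_tilde_eq_nu1 (f : ℝ → ℝ) (hf : IsTradeoffFn f)
    (hsym : ∀ β ∈ Icc (0:ℝ) 1, tfInv f β = f β) (h0 : f 0 = 1)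
    (hi1 : IntervalIntegrable (fun x => Real.log |deriv f x|) volume 0 1)
    (hi2 : IntervalIntegrable
      (fun x => (-deriv f (1 - x)) * Real.log (-deriv f (1 - x))) volume 0 1) :
    (∫ x in (0:ℝ)..1, (-deriv f (1 - x)) * Real.log (-deriv f (1 - x))) =
      -∫ x in (0:ℝ)..1, Real.log |deriv f x| := by
  have hinv : ∀ β ∈ Icc (0:ℝ) 1, f (f β) = β := tf_invol_aux hf hsym h0
  have h1 : f 1 = 0 := tf_one_aux hf
  obtain ⟨hcvx, hcont, hanti, hmaps⟩ := hf
  -- strict antitonicity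
  have hsa : StrictAntiOn f (Icc 0 1) := by
    intro a ha b hb hab
    rcases lt_or_eq_of_le (hanti ha hb hab.le) with h | h
    · exact h
    · exfalso
      have hba : b = a := by
        rw [← hinv b hb, h, hinv a ha]
      exact hab.ne hba.symm
  -- f maps the open interval to itself
  have hmapo : ∀ x ∈ Ioo (0:ℝ) 1, f x ∈ Ioo (0:ℝ) 1 := by
    intro x hx
    constructor
    · rw [← h1]
      exact hsa ⟨hx.1.le, hx.2.le⟩ (right_mem_Icc.2 zero_le_one) hx.2
    · rw [← h0]
      exact hsa (left_mem_Icc.2 zero_le_one) ⟨hx.1.le, hx.2.le⟩ hx.1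
  -- negativity of the derivative
  have hderiv_neg : ∀ x ∈ Ioo (0:ℝ) 1, DifferentiableAt ℝ f x → deriv f x < 0 := by
    intro x hx hd
    have hslope := hcvx.le_slope_of_hasDerivWithinAt_Ioi ⟨hx.1.le, hx.2.le⟩
      (right_mem_Icc.2 zero_le_one) hx.2 hd.hasDerivAt.hasDerivWithinAt
    have hsl : slope f x 1 < 0 := by
      rw [slope_def_field, h1]
      apply div_neg_of_neg_of_pos
      · linarith [(hmapo x hx).1]
      · linarith [hx.2]
    linarith
  -- inverse function derivative
  have hderinv : ∀ x ∈ Ioo (0:ℝ) 1, DifferentiableAt ℝ f x →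
      HasDerivAt f (deriv f x)⁻¹ (f x) := by
    intro x hx hd
    have hfx := hmapo x hx
    have hca : ContinuousAt f (f x) := hcont.continuousAt (Icc_mem_nhds hfx.1 hfx.2)
    have hinvx : f (f x) = x := hinv x ⟨hx.1.le, hx.2.le⟩
    have hda : HasDerivAt f (deriv f x) (f (f x)) := by
      rw [hinvx]; exact hd.hasDerivAt
    have hev : ∀ᶠ y in 𝓝 (f x), f (f y) = y := by
      filter_upwards [Ioo_mem_nhds hfx.1 hfx.2] with y hy
      exact hinv y ⟨hy.1.le, hy.2.le⟩
    exact HasDerivAt.of_local_left_inverse hca hda (hderiv_neg x hx hd).ne hev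
  -- a.e. differentiability via a monotone extension
  set F : ℝ → ℝ := fun x => f (max 0 (min x 1)) with hF
  have hcl : ∀ x : ℝ, max 0 (min x 1) ∈ Icc (0:ℝ) 1 :=
    fun x => ⟨le_max_left _ _, max_le zero_le_one (min_le_right _ _)⟩
  have hFmono : Monotone (fun x => -F x) := by
    intro a b hab
    have := hanti (hcl a) (hcl b) (max_le_max le_rfl (min_le_min hab le_rfl))
    simpa [hF] using this
  have hae : ∀ᵐ x, DifferentiableAt ℝ F x := by
    filter_upwards [hFmono.ae_differentiableAt] with x hx
    have := hx.neg
    simpa using this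
  have hFf : ∀ x ∈ Ioo (0:ℝ) 1, F =ᶠ[𝓝 x] f := by
    intro x hx
    filter_upwards [Ioo_mem_nhds hx.1 hx.2] with y hy
    simp [hF, min_eq_left hy.2.le, max_eq_right hy.1.le]
  set s := Ioo (0:ℝ) 1 ∩ {x | DifferentiableAt ℝ f x} with hs
  have hsm : MeasurableSet s :=
    measurableSet_Ioo.inter (measurableSet_of_differentiableAt ℝ f)
  have hseq : s =ᵐ[volume] Ioo (0:ℝ) 1 := by
    rw [MeasureTheory.ae_eq_set]
    constructor
    · have : s \ Ioo (0:ℝ) 1 = ∅ := diff_eq_empty.2 inter_subset_left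
      simp [this]
    · refine measure_mono_null ?_ (ae_iff.mp hae)
      rintro x ⟨hxI, hxs⟩
      intro hDF
      exact hxs ⟨hxI, ((hFf x hxI).differentiableAt_iff).1 hDF⟩
  have hIocs : Ioc (0:ℝ) 1 =ᵐ[volume] s :=
    (Ioo_ae_eq_Ioc (a := (0:ℝ)) (b := 1)).symm.trans hseq.symm
  -- f '' s = s
  have himg : f '' s = s := by
    apply Subset.antisymm
    · rintro y ⟨x, hx, rfl⟩
      exact ⟨hmapo x hx.1, (hderinv x hx.1 hx.2).differentiableAt⟩
    · intro y hy
      exact ⟨f y, ⟨hmapo y hy.1, (hderinv y hy.1 hy.2).differentiableAt⟩,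
        hinv y ⟨hy.1.1.le, hy.1.2.le⟩⟩
  have hinj : InjOn f s := fun a ha b hb hab =>
    hsa.injOn ⟨ha.1.1.le, ha.1.2.le⟩ ⟨hb.1.1.le, hb.1.2.le⟩ hab
  have hder : ∀ x ∈ s, HasDerivWithinAt f (deriv f x) s x :=
    fun x hx => hx.2.hasDerivAt.hasDerivWithinAt
  -- change of variables
  have hcov : ∀ g : ℝ → ℝ, ∫ x in s, g x = ∫ x in s, |deriv f x| • g (f x) := by
    intro g
    have := integral_image_eq_integral_abs_deriv_smul hsm hder hinj g
    rwa [himg] at this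
  have hkey : ∀ x ∈ s,
      |deriv f x| • Real.log |deriv f (f x)| = deriv f x * Real.log |deriv f x| := by
    intro x hx
    have hneg := hderiv_neg x hx.1 hx.2
    have hdfx : deriv f (f x) = (deriv f x)⁻¹ := (hderinv x hx.1 hx.2).deriv
    rw [hdfx, abs_inv, Real.log_inv, smul_eq_mul, abs_of_neg hneg]
    ring
  have e1 : ∫ x in s, Real.log |deriv f x| = ∫ x in s, deriv f x * Real.log |deriv f x| := by
    rw [hcov (fun y => Real.log |deriv f y|)]
    exact setIntegral_congr_fun hsm hkey
  have e2 : ∀ x ∈ s,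
      (-deriv f x) * Real.log (-deriv f x) = -(deriv f x * Real.log |deriv f x|) := by
    intro x hx
    have hneg := hderiv_neg x hx.1 hx.2
    rw [abs_of_neg hneg]
    ring
  calc ∫ x in (0:ℝ)..1, (-deriv f (1 - x)) * Real.log (-deriv f (1 - x))
      = ∫ x in (0:ℝ)..1, (-deriv f x) * Real.log (-deriv f x) := by
        have := intervalIntegral.integral_comp_sub_left (a := 0) (b := 1)
          (fun u => (-deriv f u) * Real.log (-deriv f u)) 1
        simpa using this
    _ = ∫ x in Ioc (0:ℝ) 1, (-deriv f x) * Real.log (-deriv f x) :=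
        intervalIntegral.integral_of_le zero_le_one
    _ = ∫ x in s, (-deriv f x) * Real.log (-deriv f x) := setIntegral_congr_set hIocs
    _ = ∫ x in s, -(deriv f x * Real.log |deriv f x|) := setIntegral_congr_fun hsm e2
    _ = -∫ x in s, deriv f x * Real.log |deriv f x| := integral_neg _
    _ = -∫ x in s, Real.log |deriv f x| := by rw [← e1]
    _ = -∫ x in Ioc (0:ℝ) 1, Real.log |deriv f x| := by
        rw [setIntegral_congr_set hIocs.symm]
    _ = -∫ x in (0:ℝ)..1, Real.log |deriv f x| := by
        rw [intervalIntegral.integral_of_le zero_le_one]
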